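/- Let $d_0, d_1, d_2, \dots$ be a sequence of positive integers and $k \geq 1$. Define $f_0 = 1$ and $f_t = \max\{0, f_{t-1} \cdot d_{t-1} - k\}$. Then there exists $t \geq 0$ with $f_{t+1} = 0$ if and only if there exists $t \geq 0$ such that $\prod_{i=0}^{t} d_i - k(1 + \sum_{i=1}^{t} \prod_{j=i}^{t} d_j) \leq 0$. -/

import Mathlib

open Finset

private def G (k : ℤ) (d : ℕ → ℤ) (t : ℕ) : ℤ :=
  (∏ i ∈ range (t + 1), d i) -
    k * (1 + ∑ i ∈ Ico 1 (t + 1), ∏ j ∈ Ico i (t + 1), d j)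

private lemma G_zero (k : ℤ) (d : ℕ → ℤ) : G k d 0 = d 0 - k := by
  simp [G]

private lemma G_succ (k : ℤ) (d : ℕ → ℤ) (t : ℕ) :
    G k d (t + 1) = G k d t * d (t + 1) - k := by
  unfold G
  rw [prod_range_succ, Finset.sum_Ico_succ_top (by omega : 1 ≤ t + 1),
    Finset.sum_congr rfl (fun i hi => Finset.prod_Ico_succ_top
      (by simp [Finset.mem_Ico] at hi; omega : i ≤ t + 1) d),
    Finset.prod_Ico_succ_top (le_refl (t + 1)), Finset.Ico_self, Finset.prod_empty,
    ← Finset.sum_mul]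
  ring

private lemma f_eq_G (k : ℤ) (d : ℕ → ℤ) (f : ℕ → ℤ) (hf0 : f 0 = 1)
    (hf : ∀ t, f (t + 1) = max 0 (f t * d t - k)) :
    ∀ t, (∀ s ≤ t, 0 < f (s + 1)) → f (t + 1) = G k d t := by
  intro t
  induction t with
  | zero =>
    intro h
    have h1 := h 0 le_rfl
    rw [hf 0, hf0] at h1 ⊢
    rw [G_zero]
    rw [max_eq_right (by omega : (0:ℤ) ≤ 1 * d 0 - k)] <;> omega
  | succ n ih =>
    intro h
    have hn := ih (fun s hs => h s (by omega))
    have h1 := h (n + 1) le_rfl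
    rw [hf (n + 1)] at h1 ⊢
    rw [hn] at h1 ⊢
    rw [G_succ]
    omega

open Finset in
theorem firefighter_birth_sequence_containable_iff
    (k : ℤ) (hk : 1 ≤ k) (d : ℕ → ℤ) (hd : ∀ i, 0 < d i)
    (f : ℕ → ℤ) (hf0 : f 0 = 1)
    (hf : ∀ t, f (t + 1) = max 0 (f t * d t - k)) :
    (∃ t : ℕ, f (t + 1) = 0) ↔
      ∃ t : ℕ, (∏ i ∈ range (t + 1), d i) -
        k * (1 + ∑ i ∈ Ico 1 (t + 1), ∏ j ∈ Ico i (t + 1), d j) ≤ 0 := by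
  have hGdef : ∀ t, G k d t = (∏ i ∈ range (t + 1), d i) -
      k * (1 + ∑ i ∈ Ico 1 (t + 1), ∏ j ∈ Ico i (t + 1), d j) := fun t => rfl
  have hpos : ∀ t, 0 ≤ f (t + 1) := fun t => by rw [hf t]; exact le_max_left _ _
  classical
  constructor
  · intro ⟨t, ht⟩
    have hex : ∃ n, f (n + 1) = 0 := ⟨t, ht⟩
    have hmin := Nat.find_spec hex
    set m := Nat.find hex with hm
    have hlt : ∀ s < m, 0 < f (s + 1) := by
      intro s hs
      have := Nat.find_min hex hs
      have := hpos s
      omega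
    refine ⟨m, ?_⟩
    rw [← hGdef]
    match m, hmin, hlt with
    | 0, hmin, hlt =>
      rw [hf 0, hf0] at hmin
      rw [G_zero]
      omega
    | (n+1), hmin, hlt =>
      have hn : f (n + 1) = G k d n :=
        f_eq_G k d f hf0 hf n (fun s hs => hlt s (by omega))
      rw [hf (n + 1), hn] at hmin
      rw [G_succ]
      omega
  · intro ⟨t, ht⟩
    by_contra hno
    push_neg at hno
    have hall : ∀ s, 0 < f (s + 1) := fun s => by have := hpos s; have := hno s; omega
    have := f_eq_G k d f hf0 hf t (fun s _ => hall s)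
    rw [← hGdef] at ht
    have := hall t
    omega
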